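/- The 7-parameter stress mode of the 5-node transition element is energy-orthogonal to the internal bubble: for the bubble function b̂(ξ,η) = 1 − (ξ²+η²)/2 on the reference square and any stress τ in the 7-parameter mode, ∫_{[-1,1]²} τ̂ : ε̃(v̂) J_K dξ dη = 0 for v̂ = (c_1 b̂, c_2 b̂), where ε̃ is the modified strain built from the modified partial derivatives with frozen Jacobi matrix at (0,0). -/

import Mathlib

open intervalIntegral

private lemma int_quad (A B C : ℝ) :
    ∫ x in (-1:ℝ)..1, (A + B*x + C*x^2) = 2*A + 2/3*C := by
  have h1 : IntervalIntegrable (fun _ : ℝ => A) MeasureTheory.volume (-1) 1 :=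
    intervalIntegrable_const
  have h2 : IntervalIntegrable (fun x : ℝ => B*x) MeasureTheory.volume (-1) 1 :=
    (continuous_const.mul continuous_id).intervalIntegrable _ _
  have h3 : IntervalIntegrable (fun x : ℝ => C*x^2) MeasureTheory.volume (-1) 1 :=
    (continuous_const.mul (continuous_pow 2)).intervalIntegrable _ _
  rw [intervalIntegral.integral_add (h1.add h2) h3, intervalIntegral.integral_add h1 h2,
    intervalIntegral.integral_const, intervalIntegral.integral_const_mul,
    intervalIntegral.integral_const_mul, integral_id, integral_pow]
  norm_num
  ring

private lemma bubble_deriv_left (c k x : ℝ) :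
    deriv (fun s : ℝ => c*(1 - (s^2 + k^2)/2)) x = -(c*x) := by
  have h1 : HasDerivAt (fun s : ℝ => s^2) (2*x) x := by simpa using hasDerivAt_pow 2 x
  have h2 := (((h1.add_const (k^2)).div_const 2).const_sub 1).const_mul c
  have h3 : HasDerivAt (fun s : ℝ => c*(1 - (s^2 + k^2)/2)) (-(c*x)) x := by
    exact h2.congr_deriv (by ring)
  exact h3.deriv

private lemma bubble_deriv_right (c k x : ℝ) :
    deriv (fun t : ℝ => c*(1 - (k^2 + t^2)/2)) x = -(c*x) := by
  have h1 : HasDerivAt (fun t : ℝ => t^2) (2*x) x := by simpa using hasDerivAt_pow 2 x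
  have h2 := (((h1.const_add (k^2)).div_const 2).const_sub 1).const_mul c
  have h3 : HasDerivAt (fun t : ℝ => c*(1 - (k^2 + t^2)/2)) (-(c*x)) x := by
    exact h2.congr_deriv (by ring)
  exact h3.deriv

/-- The 7-parameter stress mode is energy-orthogonal to the internal bubble: for the bubble
`b̂(ξ,η) = 1 - (ξ² + η²)/2` and `v̂ = (c₁ b̂, c₂ b̂)`, the integral over the reference square of
`τ̂ : ε̃(v̂) · J_K` vanishes (by the definition of the modified derivatives, the Jacobian cancels
and the integrand is expressed through `b2 ∂_ξ û - b1 ∂_η û`, etc.). -/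
theorem transition_stress_bubble_orthogonal
    (a1 a2 b1 b2 J0 : ℝ) (hJ0 : J0 = a1 * b2 - a2 * b1) (hJ0ne : J0 ≠ 0)
    (β : Fin 7 → ℝ) (c1 c2 : ℝ)
    (τ11 τ22 τ12 : ℝ → ℝ → ℝ)
    (hτ11 : ∀ ξ η, τ11 ξ η = β 0 + β 3 * η + β 5 * ξ)
    (hτ22 : ∀ ξ η, τ22 ξ η = β 1 + β 4 * ξ + β 6 * η)
    (hτ12 : ∀ ξ η, τ12 ξ η = β 2 + β 3 * ((b1 ^ 2 * ξ + b1 * b2 * η) / J0)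
        + β 4 * ((a1 * a2 * ξ + a2 ^ 2 * η) / J0)
        - β 5 * ((b1 * b2 * ξ + b2 ^ 2 * η) / J0)
        - β 6 * ((a1 ^ 2 * ξ + a1 * a2 * η) / J0))
    (u v : ℝ → ℝ → ℝ)
    (hu : ∀ ξ η, u ξ η = c1 * (1 - (ξ ^ 2 + η ^ 2) / 2))
    (hv : ∀ ξ η, v ξ η = c2 * (1 - (ξ ^ 2 + η ^ 2) / 2)) :
    (∫ ξ in (-1 : ℝ)..1, ∫ η in (-1 : ℝ)..1,
      (τ11 ξ η * (b2 * deriv (fun s => u s η) ξ - b1 * deriv (fun t => u ξ t) η)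
        + τ22 ξ η * (a1 * deriv (fun t => v ξ t) η - a2 * deriv (fun s => v s η) ξ)
        + τ12 ξ η * ((a1 * deriv (fun t => u ξ t) η - a2 * deriv (fun s => u s η) ξ)
            + (b2 * deriv (fun s => v s η) ξ - b1 * deriv (fun t => v ξ t) η)))) = 0 := by
  -- derivatives of the bubble components
  have hux : ∀ ξ η : ℝ, deriv (fun s => u s η) ξ = -(c1*ξ) := by
    intro ξ η
    have hf : (fun s => u s η) = fun s : ℝ => c1*(1 - (s^2 + η^2)/2) :=
      funext fun s => hu s η
    rw [hf, bubble_deriv_left]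
  have huy : ∀ ξ η : ℝ, deriv (fun t => u ξ t) η = -(c1*η) := by
    intro ξ η
    have hf : (fun t => u ξ t) = fun t : ℝ => c1*(1 - (ξ^2 + t^2)/2) :=
      funext fun t => hu ξ t
    rw [hf, bubble_deriv_right]
  have hvx : ∀ ξ η : ℝ, deriv (fun s => v s η) ξ = -(c2*ξ) := by
    intro ξ η
    have hf : (fun s => v s η) = fun s : ℝ => c2*(1 - (s^2 + η^2)/2) :=
      funext fun s => hv s η
    rw [hf, bubble_deriv_left]
  have hvy : ∀ ξ η : ℝ, deriv (fun t => v ξ t) η = -(c2*η) := by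
    intro ξ η
    have hf : (fun t => v ξ t) = fun t : ℝ => c2*(1 - (ξ^2 + t^2)/2) :=
      funext fun t => hv ξ t
    rw [hf, bubble_deriv_right]
  -- abbreviations for the polynomial coefficients
  set p : ℝ := (β 3*b1^2 + β 4*(a1*a2) - β 5*(b1*b2) - β 6*a1^2)/J0 with hp
  set q : ℝ := (β 3*(b1*b2) + β 4*a2^2 - β 5*b2^2 - β 6*(a1*a2))/J0 with hq
  have hL : ∀ ξ : ℝ,
      (∫ η in (-1:ℝ)..1,
        (τ11 ξ η * (b2 * deriv (fun s => u s η) ξ - b1 * deriv (fun t => u ξ t) η)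
          + τ22 ξ η * (a1 * deriv (fun t => v ξ t) η - a2 * deriv (fun s => v s η) ξ)
          + τ12 ξ η * ((a1 * deriv (fun t => u ξ t) η - a2 * deriv (fun s => u s η) ξ)
              + (b2 * deriv (fun s => v s η) ξ - b1 * deriv (fun t => v ξ t) η))))
      = 2*((β 1*c2*a2 - β 0*c1*b2 + β 2*(c1*a2 - c2*b2))*ξ
            + (β 4*c2*a2 - β 5*c1*b2 + p*(c1*a2 - c2*b2))*ξ^2)
        + 2/3*(β 3*c1*b1 - β 6*c2*a1 + q*(c2*b1 - c1*a1)) := by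
    intro ξ
    rw [show (∫ η in (-1:ℝ)..1,
        (τ11 ξ η * (b2 * deriv (fun s => u s η) ξ - b1 * deriv (fun t => u ξ t) η)
          + τ22 ξ η * (a1 * deriv (fun t => v ξ t) η - a2 * deriv (fun s => v s η) ξ)
          + τ12 ξ η * ((a1 * deriv (fun t => u ξ t) η - a2 * deriv (fun s => u s η) ξ)
              + (b2 * deriv (fun s => v s η) ξ - b1 * deriv (fun t => v ξ t) η))))
      = ∫ η in (-1:ℝ)..1,
          (((β 1*c2*a2 - β 0*c1*b2 + β 2*(c1*a2 - c2*b2))*ξ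
            + (β 4*c2*a2 - β 5*c1*b2 + p*(c1*a2 - c2*b2))*ξ^2)
           + (β 0*c1*b1 - β 1*c2*a1 + β 2*(c2*b1 - c1*a1)
              + (β 5*c1*b1 - β 3*c1*b2 + β 6*c2*a2 - β 4*c2*a1
                 + p*(c2*b1 - c1*a1) + q*(c1*a2 - c2*b2))*ξ)*η
           + (β 3*c1*b1 - β 6*c2*a1 + q*(c2*b1 - c1*a1))*η^2) from
      intervalIntegral.integral_congr fun η _ => by
        simp only [hτ11, hτ22, hτ12, hux, huy, hvx, hvy, hp, hq]
        ring, int_quad]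
  simp only [hL]
  rw [show (∫ ξ in (-1:ℝ)..1,
      (2*((β 1*c2*a2 - β 0*c1*b2 + β 2*(c1*a2 - c2*b2))*ξ
            + (β 4*c2*a2 - β 5*c1*b2 + p*(c1*a2 - c2*b2))*ξ^2)
        + 2/3*(β 3*c1*b1 - β 6*c2*a1 + q*(c2*b1 - c1*a1))))
    = ∫ ξ in (-1:ℝ)..1,
        ((2/3*(β 3*c1*b1 - β 6*c2*a1 + q*(c2*b1 - c1*a1)))
         + (2*(β 1*c2*a2 - β 0*c1*b2 + β 2*(c1*a2 - c2*b2)))*ξ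
         + (2*(β 4*c2*a2 - β 5*c1*b2 + p*(c1*a2 - c2*b2)))*ξ^2) from
    intervalIntegral.integral_congr fun ξ _ => by ring, int_quad]
  rw [hp, hq]
  subst hJ0
  have h : (-(b1 * a2) + a1 * b2) ≠ 0 := by contrapose! hJ0ne; linarith
  field_simp
  linear_combination (4*(-β 3*c1*b1 + β 5*c1*b2 + β 6*c2*a1 - β 4*c2*a2)) * mul_inv_cancel₀ h
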